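/- Under the same hypotheses (I - FX invertible, K - GX M FU invertible where M = (I - FX)⁻¹ and K = I - GU), if (I - FX) X - FU U = Fθ and -GX X + (I - GU) U = Gθ, then X = M (Fθ + FU (K - GX M FU)⁻¹ (GX M Fθ + Gθ)). -/
import Mathlib


theorem stmt_1 {n m p : ℕ}
    (FX : Matrix (Fin n) (Fin n) ℝ) (FU : Matrix (Fin n) (Fin m) ℝ)
    (GX : Matrix (Fin m) (Fin n) ℝ) (GU : Matrix (Fin m) (Fin m) ℝ)
    (X Fθ : Matrix (Fin n) (Fin p) ℝ) (U Gθ : Matrix (Fin m) (Fin p) ℝ)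
    (M : Matrix (Fin n) (Fin n) ℝ) (K : Matrix (Fin m) (Fin m) ℝ)
    (hMdef : M = (1 - FX)⁻¹) (hKdef : K = 1 - GU)
    (hM : IsUnit (1 - FX))
    (hS : IsUnit (K - GX * M * FU))
    (h1 : (1 - FX) * X - FU * U = Fθ)
    (h2 : -(GX * X) + (1 - GU) * U = Gθ) :
    X = M * (Fθ + FU * (K - GX * M * FU)⁻¹ * (GX * M * Fθ + Gθ)) := by
  have hMdet : IsUnit (1 - FX).det := (Matrix.isUnit_iff_isUnit_det _).mp hM
  have hSdet : IsUnit (K - GX * M * FU).det :=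
    (Matrix.isUnit_iff_isUnit_det _).mp hS
  have hMl : M * (1 - FX) = 1 := by rw [hMdef]; exact Matrix.nonsing_inv_mul _ hMdet
  have hX : X = M * (Fθ + FU * U) := by
    have : (1 - FX) * X = Fθ + FU * U := eq_add_of_sub_eq h1
    calc X = (M * (1 - FX)) * X := by rw [hMl, Matrix.one_mul]
    _ = M * ((1 - FX) * X) := by rw [Matrix.mul_assoc]
    _ = M * (Fθ + FU * U) := by rw [this]
  have hU : (K - GX * M * FU) * U = GX * M * Fθ + Gθ := by
    have h2' : -(GX * (M * (Fθ + FU * U))) + (1 - GU) * U = Gθ := by rw [← hX]; exact h2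
    rw [hKdef]
    linear_combination (norm := (simp only [Matrix.mul_add, Matrix.sub_mul,
      Matrix.add_mul, Matrix.mul_assoc]; abel)) h2'
  have hUeq : U = (K - GX * M * FU)⁻¹ * (GX * M * Fθ + Gθ) := by
    calc U = ((K - GX * M * FU)⁻¹ * (K - GX * M * FU)) * U := by
            rw [Matrix.nonsing_inv_mul _ hSdet, Matrix.one_mul]
    _ = (K - GX * M * FU)⁻¹ * ((K - GX * M * FU) * U) := by rw [Matrix.mul_assoc]
    _ = (K - GX * M * FU)⁻¹ * (GX * M * Fθ + Gθ) := by rw [hU]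
  rw [hX, hUeq, ← Matrix.mul_assoc FU]
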